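/- Let γ > 0, κ > 0 with γ² − 4κ ≤ 0, and let h > 0. Then both (complex) roots of the quadratic polynomial λ² + (γh − 2)λ + (1 − γh + κh²) have modulus strictly less than 1 if and only if h ∈ (0, γ/κ). -/

import Mathlib

/-- Let γ > 0, κ > 0 with γ² − 4κ ≤ 0 and h > 0. Then both complex roots of
λ² + (γh − 2)λ + (1 − γh + κh²) have modulus strictly less than 1 if and only if
h ∈ (0, γ/κ). -/
theorem oscillator_roots_modulus_lt_one_iff (γ κ h : ℝ) (hγ : 0 < γ) (hκ : 0 < κ)
    (hdisc : γ ^ 2 - 4 * κ ≤ 0) (hh : 0 < h) :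
    (∀ z : ℂ, z ^ 2 + ((γ * h - 2 : ℝ) : ℂ) * z + ((1 - γ * h + κ * h ^ 2 : ℝ) : ℂ) = 0 →
      ‖z‖ < 1) ↔ h ∈ Set.Ioo 0 (γ / κ) := by
  set s : ℝ := Real.sqrt (4 * κ - γ ^ 2) with hs_def
  have hs : s ^ 2 = 4 * κ - γ ^ 2 := Real.sq_sqrt (by linarith)
  set z₀ : ℂ := Complex.mk ((2 - γ * h) / 2) (h * s / 2) with hz₀
  set z₁ : ℂ := Complex.mk ((2 - γ * h) / 2) (-(h * s / 2)) with hz₁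
  have hsum : z₀ + z₁ = ((2 - γ * h : ℝ) : ℂ) := by
    apply Complex.ext <;> simp [hz₀, hz₁] <;> ring
  have hprod : z₀ * z₁ = ((1 - γ * h + κ * h ^ 2 : ℝ) : ℂ) := by
    apply Complex.ext
    · simp only [hz₀, hz₁, Complex.mul_re, Complex.ofReal_re]
      nlinarith [hs]
    · simp only [hz₀, hz₁, Complex.mul_im, Complex.ofReal_im]
      ring
  have hfact : ∀ z : ℂ,
      z ^ 2 + ((γ * h - 2 : ℝ) : ℂ) * z + ((1 - γ * h + κ * h ^ 2 : ℝ) : ℂ)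
        = (z - z₀) * (z - z₁) := by
    intro z
    have : ((γ * h - 2 : ℝ) : ℂ) = -(z₀ + z₁) := by rw [hsum]; push_cast; ring
    rw [this, ← hprod]; ring
  have hnsq : ∀ z : ℂ, z = z₀ ∨ z = z₁ → Complex.normSq z = 1 - γ * h + κ * h ^ 2 := by
    intro z hz
    have := congrArg Complex.re hprod
    rcases hz with rfl | rfl <;>
      simp_all [Complex.normSq_apply, hz₀, hz₁, Complex.mul_re] <;>
      nlinarith [(by rw [Real.mul_self_sqrt (by linarith)] : h * h * (√(4 * κ - γ ^ 2) * √(4 * κ - γ ^ 2)) = h * h * (4 * κ - γ ^ 2))]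
  constructor
  · intro H
    refine ⟨hh, ?_⟩
    have hroot : z₀ ^ 2 + ((γ * h - 2 : ℝ) : ℂ) * z₀
        + ((1 - γ * h + κ * h ^ 2 : ℝ) : ℂ) = 0 := by rw [hfact]; ring
    have habs := H z₀ hroot
    have h1 : Complex.normSq z₀ < 1 := by
      have := Complex.sq_norm z₀
      nlinarith [norm_nonneg z₀]
    rw [hnsq z₀ (Or.inl rfl)] at h1
    rw [lt_div_iff₀ hκ]
    nlinarith
  · rintro ⟨-, hlt⟩
    intro z hz
    rw [hfact] at hz
    have hz' : z = z₀ ∨ z = z₁ := by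
      rcases mul_eq_zero.mp hz with h' | h' <;> [left; right] <;>
        exact sub_eq_zero.mp h'
    have h1 : Complex.normSq z < 1 := by
      rw [hnsq z hz']
      rw [lt_div_iff₀ hκ] at hlt
      nlinarith
    have := Complex.sq_norm z
    nlinarith [norm_nonneg z]
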